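/- The matrix I − e^{−A₊T} is invertible, the improper integral ∫_{−∞}^{t} e^{−A₊(t−s)} g(s) ds converges for every t ∈ ℝ, and for every t ∈ [0,T] one has e^{−A₊ t}(I − e^{−A₊ T})^{−1} ∫₀^T e^{−A₊(T−s)} g(s) ds + ∫₀^t e^{−A₊(t−s)} g(s) ds = ∫_{−∞}^{t} e^{−A₊(t−s)} g(s) ds. -/

import Mathlib

open MeasureTheory intervalIntegral

section Aux

variable {mp : ℕ}

lemma aux_exp_add (A : (Fin mp → ℝ) →L[ℝ] (Fin mp → ℝ)) (a b : ℝ) :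
    NormedSpace.exp (-((a + b) • A)) =
      NormedSpace.exp (-(a • A)) * NormedSpace.exp (-(b • A)) := by
  rw [add_smul, neg_add]
  letI := NormedAlgebra.restrictScalars ℚ ℝ ((Fin mp → ℝ) →L[ℝ] (Fin mp → ℝ))
  exact NormedSpace.exp_add_of_commute
    ((((Commute.refl A).smul_left a).smul_right b).neg_left.neg_right)

lemma aux_exp_zero (A : (Fin mp → ℝ) →L[ℝ] (Fin mp → ℝ)) :
    NormedSpace.exp (-((0 : ℝ) • A)) = 1 := by
  simp [NormedSpace.exp_zero]

lemma aux_exp_pow (A : (Fin mp → ℝ) →L[ℝ] (Fin mp → ℝ)) (T : ℝ) (n : ℕ) :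
    (NormedSpace.exp (-(T • A))) ^ n = NormedSpace.exp (-(((n : ℝ) * T) • A)) := by
  induction n with
  | zero => simp [aux_exp_zero]
  | succ n ih =>
      rw [pow_succ, ih, ← aux_exp_add]
      congr 2
      push_cast
      ring_nf

lemma aux_isUnit_one_sub {R : Type*} [Ring R] (x : R) (n : ℕ)
    (h : IsUnit (1 - x ^ n)) : IsUnit (1 - x) := by
  have hc : Commute (1 - x) (∑ i ∈ Finset.range n, x ^ i) := by
    refine Commute.sum_right _ _ _ fun i _ => ?_
    exact ((Commute.one_left x).sub_left (Commute.refl x)).pow_right i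
  have hm : (1 - x) * (∑ i ∈ Finset.range n, x ^ i) = 1 - x ^ n := by
    rw [show (1 : R) - x = -(x - 1) from (neg_sub x 1).symm, neg_mul, mul_geom_sum, neg_sub]
  rw [← hm] at h
  exact (hc.isUnit_mul_iff.mp h).1

lemma aux_integrableOn_exp_mul_Iic {δ : ℝ} (hδ : 0 < δ) (t : ℝ) :
    IntegrableOn (fun s => Real.exp (δ * s)) (Set.Iic t) := by
  refine integrableOn_Iic_of_intervalIntegral_norm_bounded (Real.exp (δ * t) / δ) t
    (fun y : ℝ => ((Real.continuous_exp.comp (continuous_const.mul continuous_id)).integrableOn_Ioc))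
    Filter.tendsto_id ?_
  filter_upwards with y
  simp only [id_eq]
  have h1 : (∫ x in y..t, ‖Real.exp (δ * x)‖) = ∫ x in y..t, Real.exp (δ * x) := by
    simp [Real.norm_eq_abs, abs_of_pos (Real.exp_pos _)]
  have h2 : (∫ x in y..t, Real.exp (δ * x)) = δ⁻¹ • ∫ x in δ * y..δ * t, Real.exp x := by
    exact intervalIntegral.integral_comp_mul_left (fun x => Real.exp x) hδ.ne'
  rw [h1, h2, integral_exp]
  rw [smul_eq_mul, div_eq_inv_mul]
  have : Real.exp (δ * t) - Real.exp (δ * y) ≤ Real.exp (δ * t) := by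
    have := (Real.exp_pos (δ * y)).le; linarith
  exact mul_le_mul_of_nonneg_left this (inv_nonneg.mpr hδ.le)

end Aux

/-- Fix `T > 0`.  Let `A₊` be a real square matrix (here, a linear
operator on `ℝ^{mp}`) with constants `c > 0`, `δ > 0` such that
`‖e^{−A₊ t}‖ ≤ c e^{−δt}` for all `t ≥ 0`, and let `g : ℝ → ℝ^{mp}` be continuous and
`T`-periodic.  Then `I − e^{−A₊T}` is invertible, the improper integral
`∫_{−∞}^{t} e^{−A₊(t−s)} g(s) ds` converges for every `t ∈ ℝ`, and for every
`t ∈ [0,T]`: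
`e^{−A₊t}(I − e^{−A₊T})⁻¹ ∫₀^T e^{−A₊(T−s)} g(s) ds + ∫₀^t e^{−A₊(t−s)} g(s) ds
  = ∫_{−∞}^{t} e^{−A₊(t−s)} g(s) ds`. -/
theorem stmt6 {mp : ℕ} (T : ℝ) (hT : 0 < T)
    (A : (Fin mp → ℝ) →L[ℝ] (Fin mp → ℝ)) (c δ : ℝ) (hc : 0 < c) (hδ : 0 < δ)
    (hA : ∀ t : ℝ, 0 ≤ t → ‖NormedSpace.exp (-(t • A))‖ ≤ c * Real.exp (-δ * t))
    (g : ℝ → Fin mp → ℝ) (hg : Continuous g) (hgper : ∀ s, g (s + T) = g s) :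
    IsUnit (1 - NormedSpace.exp (-(T • A))) ∧
    (∀ t : ℝ, IntegrableOn (fun s => NormedSpace.exp (-((t - s) • A)) (g s)) (Set.Iic t)) ∧
    ∀ t ∈ Set.Icc (0 : ℝ) T,
      NormedSpace.exp (-(t • A))
          (Ring.inverse (1 - NormedSpace.exp (-(T • A)))
            (∫ s in (0 : ℝ)..T, NormedSpace.exp (-((T - s) • A)) (g s))) +
        (∫ s in (0 : ℝ)..t, NormedSpace.exp (-((t - s) • A)) (g s)) =
      ∫ s in Set.Iic t, NormedSpace.exp (-((t - s) • A)) (g s) := by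
  -- the unit
  have hUnit : IsUnit (1 - NormedSpace.exp (-(T • A))) := by
    obtain ⟨n, hn⟩ := exists_nat_gt (Real.log c / (δ * T))
    have hδT : 0 < δ * T := mul_pos hδ hT
    have hlt : c * Real.exp (-δ * ((n : ℝ) * T)) < 1 := by
      have hlog : Real.log c < (n : ℝ) * (δ * T) := by
        rw [div_lt_iff₀ hδT] at hn; linarith
      have : c * Real.exp (-δ * ((n : ℝ) * T))
          = Real.exp (Real.log c + -δ * ((n : ℝ) * T)) := by
        rw [Real.exp_add, Real.exp_log hc]
      rw [this, ← Real.exp_zero]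
      apply Real.exp_lt_exp.mpr
      nlinarith
    refine aux_isUnit_one_sub _ n ?_
    have hnorm : ‖(NormedSpace.exp (-(T • A))) ^ n‖ < 1 := by
      rw [aux_exp_pow]
      exact lt_of_le_of_lt (hA _ (by positivity)) hlt
    exact (Units.oneSub _ hnorm).isUnit
  -- bound on g
  obtain ⟨x0, _, hx0⟩ := isCompact_Icc.exists_isMaxOn (Set.nonempty_Icc.mpr hT.le)
    (hg.norm.continuousOn (s := Set.Icc 0 T))
  set M := ‖g x0‖ with hM_def
  have hM : ∀ s, ‖g s‖ ≤ M := by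
    intro s
    have hper : Function.Periodic g T := hgper
    obtain ⟨y, hy, hsy⟩ := hper.exists_mem_Ico₀ hT s
    rw [hsy]
    exact hx0 ⟨hy.1, hy.2.le⟩
  have hM0 : 0 ≤ M := (norm_nonneg _)
  -- continuity of integrand
  have hcontE : Continuous fun r : ℝ => NormedSpace.exp (-(r • A)) :=
    letI := NormedAlgebra.restrictScalars ℚ ℝ ((Fin mp → ℝ) →L[ℝ] (Fin mp → ℝ)); NormedSpace.exp_continuous.comp ((continuous_id.smul continuous_const).neg)
  have hcontf : ∀ t : ℝ, Continuous fun s => NormedSpace.exp (-((t - s) • A)) (g s) := by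
    intro t
    exact (hcontE.comp (continuous_const.sub continuous_id)).clm_apply hg
  -- integrability
  have hInt : ∀ t : ℝ,
      IntegrableOn (fun s => NormedSpace.exp (-((t - s) • A)) (g s)) (Set.Iic t) := by
    intro t
    refine Integrable.mono' (g := fun s => (c * M * Real.exp (-δ * t)) * Real.exp (δ * s))
      (((aux_integrableOn_exp_mul_Iic hδ t).const_mul _)) ((hcontf t).aestronglyMeasurable) ?_
    filter_upwards [ae_restrict_mem measurableSet_Iic] with s hs
    have hts : (0 : ℝ) ≤ t - s := sub_nonneg.mpr hs
    calc ‖NormedSpace.exp (-((t - s) • A)) (g s)‖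
        ≤ ‖NormedSpace.exp (-((t - s) • A))‖ * ‖g s‖ :=
          ContinuousLinearMap.le_opNorm _ _
      _ ≤ (c * Real.exp (-δ * (t - s))) * M := by
          exact mul_le_mul (hA _ hts) (hM s) (norm_nonneg _)
            (by positivity)
      _ = (c * M * Real.exp (-δ * t)) * Real.exp (δ * s) := by
          rw [show -δ * (t - s) = -δ * t + δ * s by ring, Real.exp_add]; ring
  refine ⟨hUnit, hInt, ?_⟩
  -- splitting lemma
  have hsplit : ∀ t : ℝ, 0 ≤ t →
      (∫ s in Set.Iic t, NormedSpace.exp (-((t - s) • A)) (g s))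
        = (∫ s in Set.Iic (0:ℝ), NormedSpace.exp (-((t - s) • A)) (g s))
          + ∫ s in (0:ℝ)..t, NormedSpace.exp (-((t - s) • A)) (g s) := by
    intro t ht
    rw [intervalIntegral.integral_of_le ht, ← Set.Iic_union_Ioc_eq_Iic ht,
      setIntegral_union (Set.Iic_disjoint_Ioc le_rfl) measurableSet_Ioc
        ((hInt t).mono_set (Set.Iic_subset_Iic.mpr ht))
        ((hInt t).mono_set Set.Ioc_subset_Iic_self)]
  -- pulling the exponential out
  have hpull : ∀ t : ℝ,
      (∫ s in Set.Iic (0:ℝ), NormedSpace.exp (-((t - s) • A)) (g s))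
        = NormedSpace.exp (-(t • A))
            (∫ s in Set.Iic (0:ℝ), NormedSpace.exp (-(((0:ℝ) - s) • A)) (g s)) := by
    intro t
    have hpt : ∀ s : ℝ, NormedSpace.exp (-((t - s) • A)) (g s)
        = NormedSpace.exp (-(t • A)) (NormedSpace.exp (-(((0:ℝ) - s) • A)) (g s)) := by
      intro s
      have : t - s = t + ((0:ℝ) - s) := by ring
      rw [this, aux_exp_add]
      rfl
    simp only [hpt]
    exact ContinuousLinearMap.integral_comp_comm _ (hInt 0)
  -- periodic shift : F T = F 0
  have hFT : (∫ s in Set.Iic T, NormedSpace.exp (-((T - s) • A)) (g s))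
      = ∫ s in Set.Iic (0:ℝ), NormedSpace.exp (-(((0:ℝ) - s) • A)) (g s) := by
    have hmp := (measurePreserving_add_right volume T).setIntegral_preimage_emb
      (measurableEmbedding_addRight T)
      (fun s => NormedSpace.exp (-((T - s) • A)) (g s)) (Set.Iic T)
    have hpre : (fun x : ℝ => x + T) ⁻¹' Set.Iic T = Set.Iic 0 := by
      ext x; simp
    rw [hpre] at hmp
    rw [← hmp]
    refine setIntegral_congr_fun measurableSet_Iic fun x _ => ?_
    have h1 : T - (x + T) = (0:ℝ) - x := by ring
    rw [h1, hgper]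
  -- main algebra
  set x := NormedSpace.exp (-(T • A)) with hx_def
  set F0 := ∫ s in Set.Iic (0:ℝ), NormedSpace.exp (-(((0:ℝ) - s) • A)) (g s) with hF0_def
  set G := ∫ s in (0:ℝ)..T, NormedSpace.exp (-((T - s) • A)) (g s) with hG_def
  have hkey := hsplit T hT.le
  rw [hpull T, hFT] at hkey
  have hB : (1 - x) F0 = G := by
    rw [ContinuousLinearMap.sub_apply, ContinuousLinearMap.one_apply]
    nth_rewrite 1 [hkey]
    abel
  have hRinv : Ring.inverse (1 - x) G = F0 := by
    rw [← hB]
    have : Ring.inverse (1 - x) ((1 - x) F0) = ((Ring.inverse (1 - x)) * (1 - x)) F0 := rfl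
    rw [this, Ring.inverse_mul_cancel _ hUnit, ContinuousLinearMap.one_apply]
  intro t ht
  rw [hRinv, hsplit t ht.1, hpull t]
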